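/- A linear operator Δ on a commutative unital algebra A is a differential operator of order ≤ N (in the Grothendieck sense of iterated commutators) if and only if all the Koszul brackets {a₁,…,aₙ} := [···[Δ, L_{a₁}],···, L_{aₙ}](1) with n > N arguments vanish. -/

import Mathlib

variable (k : Type) [Field k] (A : Type) [CommRing A] [Algebra k A]

/-- The operator of multiplication by `a`. -/
def lmul (a : A) : Module.End k A := LinearMap.mulLeft k a

/-- The commutator of operators. -/
def cbr (X Y : Module.End k A) : Module.End k A := X * Y - Y * X

/-- Iterated commutators `[⋯[[Δ, L_{a₁}], L_{a₂}]⋯, L_{aₙ}]` along a list of elements. -/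
def cfold (Δ : Module.End k A) (l : List A) : Module.End k A :=
  l.foldl (fun X a => cbr k A X (lmul k A a)) Δ

/-- The `n`-ary Koszul bracket `{a₁,…,aₙ} := [⋯[[Δ, L_{a₁}], L_{a₂}]⋯, L_{aₙ}](1)`. -/
def kbr (Δ : Module.End k A) (l : List A) : A := cfold k A Δ l 1

/-- `Δ` is a differential operator of order `≤ n` in the Grothendieck sense. -/
def OrdLE (Δ : Module.End k A) (n : ℕ) : Prop :=
  ∀ l : List A, l.length = n + 1 → cfold k A Δ l = 0

lemma cfold_append (Δ : Module.End k A) (l₁ l₂ : List A) :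
    cfold k A Δ (l₁ ++ l₂) = cfold k A (cfold k A Δ l₁) l₂ := by
  simp [cfold, List.foldl_append]

lemma cfold_zero (l : List A) : cfold k A 0 l = 0 := by
  induction l with
  | nil => rfl
  | cons a l ih =>
      have : cbr k A 0 (lmul k A a) = 0 := by simp [cbr]
      simpa [cfold, this] using ih

lemma cfold_eval (Δ : Module.End k A) (l : List A) (b : A) :
    (cfold k A Δ l) b = cfold k A Δ (l ++ [b]) 1 + b * (cfold k A Δ l 1) := by
  rw [cfold_append]
  set X := cfold k A Δ l
  simp [cfold, cbr, lmul, LinearMap.sub_apply, Module.End.mul_apply]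

/-- `Δ` is a differential operator of order `≤ N` (iterated-commutator
sense) iff all its Koszul brackets with more than `N` arguments vanish. -/
theorem stmt3 (Δ : Module.End k A) (N : ℕ) :
    OrdLE k A Δ N ↔ ∀ l : List A, N < l.length → kbr k A Δ l = 0 := by
  constructor
  · intro h l hl
    have htake : (l.take (N + 1)).length = N + 1 := by
      simp [List.length_take]; omega
    have h0 : cfold k A Δ (l.take (N + 1)) = 0 := h _ htake
    have : l = l.take (N + 1) ++ l.drop (N + 1) := (List.take_append_drop _ _).symm
    rw [kbr, this, cfold_append, h0, cfold_zero]
    rfl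
  · intro h l hl
    ext b
    have h1 : kbr k A Δ (l ++ [b]) = 0 := h _ (by simp [hl])
    have h2 : kbr k A Δ l = 0 := h _ (by omega)
    have := cfold_eval k A Δ l b
    rw [show cfold k A Δ (l ++ [b]) 1 = kbr k A Δ (l ++ [b]) from rfl] at this
    rw [show cfold k A Δ l 1 = kbr k A Δ l from rfl] at this
    rw [h1, h2] at this
    simpa using this
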